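/- Assume additionally that ∫_{1/2}^1 μ(α) dα > 0. Then there exists γ₀ ∈ (0, 1/4) with b_μ := ∫_{1/2+γ₀}^{1-γ₀} μ(α) dα > 0 such that, with b̄_μ := sin(π γ₀) b_μ, the kernel g satisfies g(t) ≤ (1/(b̄_μ π)) · ( 1/γ₀ + Γ(1/2 - γ₀) · t^{γ₀ - 1/2} ) for all t > 0; in particular g ∈ L²(0,T) for every T > 0. -/

import Mathlib

open MeasureTheory Real Set

private lemma aux_rpow_le_max {r α : ℝ} (hr : 0 < r) (h0 : 0 ≤ α) (h1 : α ≤ 1) :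
    r ^ α ≤ max 1 r := by
  rcases le_total r 1 with h | h
  · exact le_max_of_le_left (Real.rpow_le_one hr.le h h0)
  · calc r ^ α ≤ r ^ (1 : ℝ) := Real.rpow_le_rpow_of_exponent_le h h1
      _ = r := Real.rpow_one r
      _ ≤ max 1 r := le_max_right _ _

private lemma aux_min_le_rpow {r γ α : ℝ} (hr : 0 < r) (hα : 1/2 + γ ≤ α) (hα1 : α ≤ 1 - γ) :
    min (r ^ (1 - γ)) (r ^ (1/2 + γ)) ≤ r ^ α := by
  rcases le_total r 1 with h | h
  · exact le_trans (min_le_left _ _) (Real.rpow_le_rpow_of_exponent_ge hr h hα1)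
  · exact le_trans (min_le_right _ _) (Real.rpow_le_rpow_of_exponent_le h hα)

private lemma aux_sin_ge {γ α : ℝ} (hγ : 0 < γ) (hγ4 : γ < 1/4) (hα : 1/2 + γ ≤ α)
    (hα1 : α ≤ 1 - γ) : Real.sin (π * γ) ≤ Real.sin (π * α) := by
  have hπ := Real.pi_pos
  have h1 : Real.sin (π * α) = Real.sin (π * (1 - α)) := by
    rw [show π * (1 - α) = π - π * α by ring, Real.sin_pi_sub]
  rw [h1]
  have hmem1 : π * γ ∈ Icc (-(π/2)) (π/2) := ⟨by nlinarith, by nlinarith⟩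
  have hmem2 : π * (1 - α) ∈ Icc (-(π/2)) (π/2) := ⟨by nlinarith, by nlinarith⟩
  exact Real.strictMonoOn_sin.monotoneOn hmem1 hmem2 (by nlinarith)

private lemma aux_int {μ : ℝ → ℝ} (hμ_int : IntegrableOn μ (Ioo 0 1))
    (φ : ℝ → ℝ) (hφc : Continuous φ) (hφb : ∀ x, |φ x| ≤ 1) {r : ℝ} (hr : 0 < r) :
    IntegrableOn (fun α => φ α * r ^ α * μ α) (Ioo (0:ℝ) 1) := by
  have hmeas : AEStronglyMeasurable (fun α => φ α * r ^ α * μ α)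
      (volume.restrict (Ioo (0:ℝ) 1)) := by
    have he : Continuous (fun α : ℝ => φ α * r ^ α) := by
      have heq : (fun α : ℝ => φ α * r ^ α) = fun α => φ α * Real.exp (Real.log r * α) := by
        funext α; rw [Real.rpow_def_of_pos hr]
      rw [heq]
      exact hφc.mul (Real.continuous_exp.comp (continuous_const.mul continuous_id))
    exact he.aestronglyMeasurable.mul hμ_int.1
  refine Integrable.mono (hμ_int.norm.const_mul (max 1 r)) hmeas ?_
  filter_upwards [self_mem_ae_restrict measurableSet_Ioo] with α hα
  have h2 : r ^ α ≤ max 1 r := aux_rpow_le_max hr hα.1.le hα.2.le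
  have h3 : |r ^ α| = r ^ α := abs_of_nonneg (Real.rpow_nonneg hr.le α)
  calc ‖φ α * r ^ α * μ α‖ = |φ α| * |r ^ α| * |μ α| := by
        rw [Real.norm_eq_abs, abs_mul, abs_mul]
    _ ≤ 1 * max 1 r * |μ α| := by
        rw [h3]
        exact mul_le_mul_of_nonneg_right
          (mul_le_mul (hφb α) h2 (Real.rpow_nonneg hr.le α) zero_le_one) (abs_nonneg _)
    _ = ‖max 1 r * ‖μ α‖‖ := by
        simp [Real.norm_eq_abs, abs_mul, abs_abs,
          abs_of_nonneg (le_trans zero_le_one (le_max_left 1 r))]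

private lemma aux_contOn {μ : ℝ → ℝ} (hμ_int : IntegrableOn μ (Ioo 0 1))
    (φ : ℝ → ℝ) (hφc : Continuous φ) (hφb : ∀ x, |φ x| ≤ 1) :
    ContinuousOn (fun r => ∫ α in Ioo (0:ℝ) 1, φ α * r ^ α * μ α) (Ioi 0) := by
  intro r₀ hr₀
  have hr₀' : (0:ℝ) < r₀ := hr₀
  apply ContinuousAt.continuousWithinAt
  apply continuousAt_of_dominated (bound := fun α => max 1 (r₀ + 1) * ‖μ α‖)
  · filter_upwards [Ioi_mem_nhds hr₀'] with r hr
    exact (aux_int hμ_int φ hφc hφb hr).1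
  · filter_upwards [Ioo_mem_nhds hr₀' (lt_add_one r₀)] with r hr
    filter_upwards [self_mem_ae_restrict measurableSet_Ioo] with α hα
    have h2 : r ^ α ≤ max 1 (r₀ + 1) :=
      (aux_rpow_le_max hr.1 hα.1.le hα.2.le).trans (max_le_max le_rfl hr.2.le)
    have h3 : |r ^ α| = r ^ α := abs_of_nonneg (Real.rpow_nonneg hr.1.le α)
    calc ‖φ α * r ^ α * μ α‖ = |φ α| * |r ^ α| * |μ α| := by
          rw [Real.norm_eq_abs, abs_mul, abs_mul]
      _ ≤ 1 * max 1 (r₀ + 1) * |μ α| := by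
          rw [h3]
          exact mul_le_mul_of_nonneg_right
            (mul_le_mul (hφb α) h2 (Real.rpow_nonneg hr.1.le α) zero_le_one) (abs_nonneg _)
      _ = max 1 (r₀ + 1) * ‖μ α‖ := by rw [one_mul, Real.norm_eq_abs]
  · exact hμ_int.norm.const_mul _
  · filter_upwards [self_mem_ae_restrict measurableSet_Ioo] with α hα
    exact ((Real.continuousAt_rpow_const r₀ α (Or.inl hr₀'.ne')).const_mul _).mul
      continuousAt_const

private lemma aux_exists_gamma {μ : ℝ → ℝ} (hμ_int : IntegrableOn μ (Ioo 0 1))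
    (hμ_nonneg : ∀ α ∈ Ioo (0:ℝ) 1, 0 ≤ μ α)
    (hμhalf : 0 < ∫ α in Ioo (1/2 : ℝ) 1, μ α) :
    ∃ γ ∈ Ioo (0:ℝ) (1/4), 0 < ∫ α in Ioo (1/2 + γ) (1 - γ), μ α := by
  by_contra hcon
  push_neg at hcon
  have key : ∀ n : ℕ,
      μ =ᵐ[volume.restrict (Ioo (1/2 + 1/(n+5 : ℝ)) (1 - 1/(n+5 : ℝ)))] 0 := by
    intro n
    have hn5 : (0:ℝ) < (n+5 : ℝ) := by positivity
    have hpos : (0:ℝ) < 1/(n+5 : ℝ) := by positivity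
    have hlt : 1/(n+5 : ℝ) < 1/4 := by
      rw [div_lt_div_iff₀ hn5 (by norm_num)]
      have : (0:ℝ) ≤ (n:ℝ) := Nat.cast_nonneg n
      linarith
    set γ := 1/(n+5 : ℝ) with hγdef
    have hsub : Ioo (1/2 + γ) (1 - γ) ⊆ Ioo (0:ℝ) 1 := by
      intro x hx
      exact ⟨by linarith [hx.1], by linarith [hx.2]⟩
    have hint : IntegrableOn μ (Ioo (1/2+γ) (1-γ)) := hμ_int.mono_set hsub
    have hae : 0 ≤ᵐ[volume.restrict (Ioo (1/2+γ) (1-γ))] μ :=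
      (ae_restrict_iff' measurableSet_Ioo).2
        (Filter.Eventually.of_forall fun x hx => hμ_nonneg x (hsub hx))
    have hle := hcon γ ⟨hpos, hlt⟩
    have hge : 0 ≤ ∫ α in Ioo (1/2+γ) (1-γ), μ α :=
      setIntegral_nonneg measurableSet_Ioo fun x hx => hμ_nonneg x (hsub hx)
    exact (setIntegral_eq_zero_iff_of_nonneg_ae hae hint).mp (le_antisymm hle hge)
  have hun : (Ioo (1/2:ℝ) 1) = ⋃ n : ℕ, Ioo (1/2 + 1/(n+5 : ℝ)) (1 - 1/(n+5 : ℝ)) := by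
    ext x
    simp only [mem_iUnion, mem_Ioo]
    constructor
    · rintro ⟨h1, h2⟩
      obtain ⟨n, hn⟩ := exists_nat_one_div_lt
        (lt_min (by linarith : (0:ℝ) < x - 1/2) (by linarith : (0:ℝ) < 1 - x))
      have h15 : (0:ℝ) < (n+1 : ℝ) := by positivity
      have h55 : (n+1 : ℝ) ≤ (n+5 : ℝ) := by norm_num
      have hle' : 1/((n:ℝ)+5) ≤ 1/((n:ℝ)+1) := by
        apply one_div_le_one_div_of_le h15 h55
      have hmin1 := (lt_min_iff.mp hn).1
      have hmin2 := (lt_min_iff.mp hn).2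
      exact ⟨n, by push_cast at hle' ⊢; linarith, by push_cast at hle' ⊢; linarith⟩
    · rintro ⟨n, h1, h2⟩
      have hpos : (0:ℝ) < 1/(n+5 : ℝ) := by positivity
      exact ⟨by linarith, by linarith⟩
  have hzero : μ =ᵐ[volume.restrict (Ioo (1/2:ℝ) 1)] 0 := by
    rw [hun]
    exact (ae_restrict_iUnion_iff _ _).2 key
  rw [integral_congr_ae hzero] at hμhalf
  simp at hμhalf

/-- If additionally `∫_{1/2}^1 μ(α) dα > 0`, then there exists
`γ₀ ∈ (0,1/4)` with `b_μ := ∫_{1/2+γ₀}^{1-γ₀} μ(α) dα > 0` such that, with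
`b̄_μ := sin(πγ₀) b_μ`, the kernel satisfies
`g(t) ≤ (1/(b̄_μ π)) (1/γ₀ + Γ(1/2-γ₀) t^{γ₀-1/2})` for all `t > 0`;
in particular `g ∈ L²(0,T)` for every `T > 0`. -/
theorem stmt_15 (μ : ℝ → ℝ)
    (hμ_int : IntegrableOn μ (Ioo 0 1))
    (hμ_nonneg : ∀ α ∈ Ioo (0:ℝ) 1, 0 ≤ μ α)
    (hμ_ne : ¬ (∀ᵐ α ∂(volume.restrict (Ioo (0:ℝ) 1)), μ α = 0))
    (S C g : ℝ → ℝ)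
    (hS : ∀ r : ℝ, S r = ∫ α in Ioo (0:ℝ) 1, Real.sin (π * α) * r ^ α * μ α)
    (hC : ∀ r : ℝ, C r = ∫ α in Ioo (0:ℝ) 1, Real.cos (π * α) * r ^ α * μ α)
    (hg : ∀ t : ℝ, 0 < t →
      g t = (1/π) * ∫ r in Ioi (0:ℝ), Real.exp (-r * t) * S r / ((S r)^2 + (C r)^2))
    (hμhalf : 0 < ∫ α in Ioo (1/2 : ℝ) 1, μ α) :
    ∃ γ₀ ∈ Ioo (0:ℝ) (1/4),
      0 < (∫ α in Ioo (1/2 + γ₀) (1 - γ₀), μ α) ∧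
      (∀ t : ℝ, 0 < t →
        g t ≤ (1 / ((Real.sin (π * γ₀) * ∫ α in Ioo (1/2 + γ₀) (1 - γ₀), μ α) * π)) *
          (1 / γ₀ + Real.Gamma (1/2 - γ₀) * t ^ (γ₀ - 1/2))) ∧
      (∀ T : ℝ, 0 < T → MemLp g 2 (volume.restrict (Ioo 0 T))) := by
  obtain ⟨γ, hγmem, hb⟩ := aux_exists_gamma hμ_int hμ_nonneg hμhalf
  obtain ⟨hγ0, hγ4⟩ := hγmem
  have hπ := Real.pi_pos
  set b := ∫ α in Ioo (1/2 + γ) (1 - γ), μ α with hbdef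
  have hsγ : 0 < Real.sin (π * γ) :=
    Real.sin_pos_of_pos_of_lt_pi (by positivity) (by nlinarith)
  set bb := Real.sin (π * γ) * b with hbbdef
  have hbb : 0 < bb := mul_pos hsγ hb
  have hγhalf : (0:ℝ) < 1/2 - γ := by linarith
  have hsub : Ioo (1/2 + γ) (1 - γ) ⊆ Ioo (0:ℝ) 1 :=
    fun x hx => ⟨by linarith [hx.1], by linarith [hx.2]⟩
  -- lower bound for S
  have hSlow : ∀ r : ℝ, 0 < r → bb * min (r ^ (1 - γ)) (r ^ (1/2 + γ)) ≤ S r := by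
    intro r hr
    set m := min (r ^ (1 - γ)) (r ^ (1/2 + γ)) with hm
    have hm0 : 0 < m := lt_min (Real.rpow_pos_of_pos hr _) (Real.rpow_pos_of_pos hr _)
    have hint1 : IntegrableOn (fun α => Real.sin (π * α) * r ^ α * μ α) (Ioo (0:ℝ) 1) :=
      aux_int hμ_int _ (Real.continuous_sin.comp (continuous_const.mul continuous_id))
        (fun x => Real.abs_sin_le_one _) hr
    have hnn : 0 ≤ᵐ[volume.restrict (Ioo (0:ℝ) 1)]
        fun α => Real.sin (π * α) * r ^ α * μ α := by
      filter_upwards [self_mem_ae_restrict measurableSet_Ioo] with α hα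
      have hsn : 0 ≤ Real.sin (π * α) :=
        Real.sin_nonneg_of_nonneg_of_le_pi (by nlinarith [hα.1]) (by nlinarith [hα.2])
      exact mul_nonneg (mul_nonneg hsn (Real.rpow_nonneg hr.le α)) (hμ_nonneg α hα)
    have step1 : (∫ α in Ioo (1/2+γ) (1-γ), Real.sin (π * α) * r ^ α * μ α) ≤ S r := by
      rw [hS r]
      exact setIntegral_mono_set hint1 hnn hsub.eventuallyLE
    have step2 : bb * m ≤ ∫ α in Ioo (1/2+γ) (1-γ), Real.sin (π * α) * r ^ α * μ α := by
      have h1 : bb * m = ∫ α in Ioo (1/2+γ) (1-γ), (Real.sin (π * γ) * m) * μ α := by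
        rw [integral_const_mul, hbbdef, hbdef]; ring
      rw [h1]
      refine setIntegral_mono_on ((hμ_int.mono_set hsub).const_mul _)
        (hint1.mono_set hsub) measurableSet_Ioo ?_
      intro α hα
      have hsge := aux_sin_ge hγ0 hγ4 hα.1.le hα.2.le
      have hmle : m ≤ r ^ α := aux_min_le_rpow hr hα.1.le hα.2.le
      have hprod : Real.sin (π * γ) * m ≤ Real.sin (π * α) * r ^ α :=
        mul_le_mul hsge hmle hm0.le (hsγ.le.trans hsge)
      exact mul_le_mul_of_nonneg_right hprod (hμ_nonneg α (hsub hα))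
    linarith
  have hSpos : ∀ r : ℝ, 0 < r → 0 < S r := by
    intro r hr
    have hm0 : 0 < min (r ^ (1 - γ)) (r ^ (1/2 + γ)) :=
      lt_min (Real.rpow_pos_of_pos hr _) (Real.rpow_pos_of_pos hr _)
    exact lt_of_lt_of_le (mul_pos hbb hm0) (hSlow r hr)
  -- nonnegativity of the integrand
  have hf_nonneg : ∀ (t : ℝ), ∀ r ∈ Ioi (0:ℝ),
      0 ≤ Real.exp (-r * t) * S r / ((S r)^2 + (C r)^2) := by
    intro t r hr
    exact div_nonneg (mul_nonneg (Real.exp_nonneg _) (hSpos r hr).le) (by positivity)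
  -- pointwise upper bound by h
  have hf_le : ∀ (t : ℝ), 0 < t → ∀ r ∈ Ioi (0:ℝ),
      Real.exp (-r * t) * S r / ((S r)^2 + (C r)^2) ≤
        (1/bb) * ((Ioc (0:ℝ) 1).indicator (fun r => r ^ (γ - 1)) r
          + Real.exp (-r * t) * r ^ (-(1/2) - γ)) := by
    intro t ht r hrmem
    have hr : (0:ℝ) < r := hrmem
    set m := min (r ^ (1 - γ)) (r ^ (1/2 + γ)) with hm
    have hm0 : 0 < m := lt_min (Real.rpow_pos_of_pos hr _) (Real.rpow_pos_of_pos hr _)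
    have hSr := hSpos r hr
    have hexp1 : Real.exp (-r * t) ≤ 1 := Real.exp_le_one_iff.2 (by nlinarith)
    have h1 : Real.exp (-r * t) * S r / ((S r)^2 + (C r)^2) ≤ Real.exp (-r * t) / S r := by
      rw [div_le_div_iff₀ (by positivity) hSr]
      nlinarith [mul_nonneg (Real.exp_nonneg (-r * t)) (sq_nonneg (C r))]
    have h2 : Real.exp (-r * t) / S r ≤ Real.exp (-r * t) / (bb * m) :=
      div_le_div_of_nonneg_left (Real.exp_nonneg _) (mul_pos hbb hm0) (hSlow r hr)
    refine (h1.trans h2).trans ?_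
    rcases le_or_gt r 1 with hr1 | hr1
    · have hmeq : m = r ^ (1 - γ) :=
        min_eq_left (Real.rpow_le_rpow_of_exponent_ge hr hr1 (by linarith))
      have hind : (Ioc (0:ℝ) 1).indicator (fun r => r ^ (γ - 1)) r = r ^ (γ - 1) :=
        Set.indicator_of_mem (show r ∈ Ioc (0:ℝ) 1 from ⟨hr, hr1⟩) _
      have hinv : (r ^ (1 - γ : ℝ))⁻¹ = r ^ (γ - 1 : ℝ) := by
        rw [show (γ - 1 : ℝ) = -(1 - γ) by ring, Real.rpow_neg hr.le]
      have e1 : Real.exp (-r * t) / (bb * m) ≤ 1 / (bb * r ^ (1 - γ)) := by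
        rw [hmeq]
        exact div_le_div₀ zero_le_one hexp1 (mul_pos hbb (Real.rpow_pos_of_pos hr _)) le_rfl
      have e2 : 1 / (bb * r ^ (1 - γ)) = (1/bb) * r ^ (γ - 1) := by
        rw [one_div, mul_inv, hinv, one_div]
      refine e1.trans ?_
      rw [e2]
      refine mul_le_mul_of_nonneg_left ?_ (by positivity)
      rw [hind]
      exact le_add_of_nonneg_right (by positivity)
    · have hmeq : m = r ^ (1/2 + γ) :=
        min_eq_right (Real.rpow_le_rpow_of_exponent_le hr1.le (by linarith))
      have hinv : (r ^ (1/2 + γ : ℝ))⁻¹ = r ^ (-(1/2) - γ : ℝ) := by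
        rw [show (-(1/2) - γ : ℝ) = -(1/2 + γ) by ring, Real.rpow_neg hr.le]
      have e1 : Real.exp (-r * t) / (bb * m) =
          (1/bb) * (Real.exp (-r * t) * r ^ (-(1/2) - γ)) := by
        rw [hmeq, div_eq_mul_inv, mul_inv, hinv, one_div]; ring
      rw [e1]
      refine mul_le_mul_of_nonneg_left ?_ (by positivity)
      refine le_add_of_nonneg_left ?_
      exact indicator_nonneg (fun x hx => Real.rpow_nonneg hx.1.le _) r
  -- integrability and value of the dominating function
  have hind_int' : Integrable ((Ioc (0:ℝ) 1).indicator (fun r => r ^ (γ - 1)))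
      (volume.restrict (Ioi 0)) := by
    have hII : IntegrableOn (fun r : ℝ => r ^ (γ - 1)) (Ioc (0:ℝ) 1) := by
      have := intervalIntegral.intervalIntegrable_rpow' (a := 0) (b := 1) (by linarith : (-1:ℝ) < γ - 1)
      rwa [intervalIntegrable_iff_integrableOn_Ioc_of_le (by norm_num)] at this
    rw [integrable_indicator_iff measurableSet_Ioc]
    rw [IntegrableOn, Measure.restrict_restrict measurableSet_Ioc,
      inter_eq_self_of_subset_left Ioc_subset_Ioi_self]
    exact hII
  have hind_val : ∫ r in Ioi (0:ℝ), (Ioc (0:ℝ) 1).indicator (fun r => r ^ (γ - 1)) r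
      = 1/γ := by
    rw [integral_indicator measurableSet_Ioc, Measure.restrict_restrict measurableSet_Ioc,
      inter_eq_self_of_subset_left Ioc_subset_Ioi_self,
      ← intervalIntegral.integral_of_le (by norm_num : (0:ℝ) ≤ 1),
      integral_rpow (Or.inl (by linarith : (-1:ℝ) < γ - 1))]
    rw [show γ - 1 + 1 = γ by ring, Real.one_rpow, Real.zero_rpow hγ0.ne']
    ring
  have hexp_int : ∀ t : ℝ, 0 < t →
      IntegrableOn (fun r : ℝ => Real.exp (-r * t) * r ^ (-(1/2) - γ)) (Ioi (0:ℝ)) := by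
    intro t ht
    have := integrableOn_rpow_mul_exp_neg_mul_rpow
      (p := 1) (s := -(1/2) - γ) (b := t) (by linarith) zero_lt_one ht
    refine this.congr_fun ?_ measurableSet_Ioi
    intro x hx
    simp only [Real.rpow_one]
    ring
  have hexp_val : ∀ t : ℝ, 0 < t →
      ∫ r in Ioi (0:ℝ), Real.exp (-r * t) * r ^ (-(1/2) - γ)
        = Real.Gamma (1/2 - γ) * t ^ (γ - 1/2) := by
    intro t ht
    have hI := Real.integral_rpow_mul_exp_neg_mul_Ioi (a := 1/2 - γ) hγhalf ht
    rw [show (1/2 - γ - 1 : ℝ) = -(1/2) - γ by ring] at hI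
    have heq : ∀ r ∈ Ioi (0:ℝ), Real.exp (-r * t) * r ^ (-(1/2) - γ)
        = r ^ (-(1/2) - γ) * Real.exp (-(t * r)) := by
      intro r _
      rw [show -(t * r) = -r * t by ring]
      ring
    rw [setIntegral_congr_fun measurableSet_Ioi heq, hI]
    rw [one_div, Real.inv_rpow ht.le, ← Real.rpow_neg ht.le,
      show -(1/2 - γ : ℝ) = γ - 1/2 by ring]
    ring
  have hh_int : ∀ t : ℝ, 0 < t →
      Integrable (fun r => (1/bb) * ((Ioc (0:ℝ) 1).indicator (fun r => r ^ (γ - 1)) r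
        + Real.exp (-r * t) * r ^ (-(1/2) - γ))) (volume.restrict (Ioi (0:ℝ))) := by
    intro t ht
    exact (hind_int'.add (hexp_int t ht)).const_mul _
  have hh_val : ∀ t : ℝ, 0 < t →
      (∫ r in Ioi (0:ℝ), (1/bb) * ((Ioc (0:ℝ) 1).indicator (fun r => r ^ (γ - 1)) r
        + Real.exp (-r * t) * r ^ (-(1/2) - γ)))
      = (1/bb) * (1/γ + Real.Gamma (1/2 - γ) * t ^ (γ - 1/2)) := by
    intro t ht
    rw [integral_const_mul, integral_add hind_int' (hexp_int t ht), hind_val, hexp_val t ht]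
  -- main bound
  have hmain : ∀ t : ℝ, 0 < t →
      g t ≤ (1 / (bb * π)) * (1/γ + Real.Gamma (1/2 - γ) * t ^ (γ - 1/2)) := by
    intro t ht
    have hle_int : (∫ r in Ioi (0:ℝ), Real.exp (-r * t) * S r / ((S r)^2 + (C r)^2))
        ≤ ∫ r in Ioi (0:ℝ), (1/bb) * ((Ioc (0:ℝ) 1).indicator (fun r => r ^ (γ - 1)) r
            + Real.exp (-r * t) * r ^ (-(1/2) - γ)) := by
      refine integral_mono_of_nonneg ?_ (hh_int t ht) ?_
      · exact (ae_restrict_iff' measurableSet_Ioi).2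
          (Filter.Eventually.of_forall (hf_nonneg t))
      · exact (ae_restrict_iff' measurableSet_Ioi).2
          (Filter.Eventually.of_forall (hf_le t ht))
    rw [hg t ht]
    calc (1/π) * ∫ r in Ioi (0:ℝ), Real.exp (-r * t) * S r / ((S r)^2 + (C r)^2)
        ≤ (1/π) * ∫ r in Ioi (0:ℝ), (1/bb) * ((Ioc (0:ℝ) 1).indicator
            (fun r => r ^ (γ - 1)) r + Real.exp (-r * t) * r ^ (-(1/2) - γ)) := by
          exact mul_le_mul_of_nonneg_left hle_int (by positivity)
      _ = (1 / (bb * π)) * (1/γ + Real.Gamma (1/2 - γ) * t ^ (γ - 1/2)) := by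
          rw [hh_val t ht]
          ring
  -- nonnegativity of g
  have hg_nonneg : ∀ t : ℝ, 0 < t → 0 ≤ g t := by
    intro t ht
    rw [hg t ht]
    exact mul_nonneg (by positivity)
      (setIntegral_nonneg measurableSet_Ioi (hf_nonneg t))
  -- continuity of S and C on Ioi 0
  have hSc : ContinuousOn S (Ioi 0) := by
    have h := aux_contOn hμ_int (fun α => Real.sin (π * α))
      (Real.continuous_sin.comp (continuous_const.mul continuous_id))
      (fun x => Real.abs_sin_le_one _)
    have : S = fun r => ∫ α in Ioo (0:ℝ) 1, Real.sin (π * α) * r ^ α * μ α := funext hS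
    rw [this]; exact h
  have hCc : ContinuousOn C (Ioi 0) := by
    have h := aux_contOn hμ_int (fun α => Real.cos (π * α))
      (Real.continuous_cos.comp (continuous_const.mul continuous_id))
      (fun x => Real.abs_cos_le_one _)
    have : C = fun r => ∫ α in Ioo (0:ℝ) 1, Real.cos (π * α) * r ^ α * μ α := funext hC
    rw [this]; exact h
  have hden_ne : ∀ r ∈ Ioi (0:ℝ), (S r)^2 + (C r)^2 ≠ 0 := by
    intro r hr
    have := hSpos r hr
    nlinarith [sq_nonneg (C r)]
  have hψ : ContinuousOn (fun r => S r / ((S r)^2 + (C r)^2)) (Ioi 0) :=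
    hSc.div ((hSc.pow 2).add (hCc.pow 2)) hden_ne
  -- continuity of the integral function G on Ioi 0
  have hGc : ContinuousOn
      (fun t => ∫ r in Ioi (0:ℝ), Real.exp (-r * t) * S r / ((S r)^2 + (C r)^2))
      (Ioi 0) := by
    intro t₀ ht₀
    have ht₀' : (0:ℝ) < t₀ := ht₀
    apply ContinuousAt.continuousWithinAt
    apply continuousAt_of_dominated
      (bound := fun r => (1/bb) * ((Ioc (0:ℝ) 1).indicator (fun r => r ^ (γ - 1)) r
        + Real.exp (-r * (t₀/2)) * r ^ (-(1/2) - γ)))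
    · filter_upwards with τ
      have : (fun r => Real.exp (-r * τ) * S r / ((S r)^2 + (C r)^2))
          = fun r => Real.exp (-r * τ) * (S r / ((S r)^2 + (C r)^2)) := by
        funext r; rw [mul_div_assoc]
      rw [this]
      exact (((Real.continuous_exp.comp
        ((continuous_id.neg).mul continuous_const)).continuousOn.mul hψ)).aestronglyMeasurable
        measurableSet_Ioi
    · filter_upwards [Ioi_mem_nhds (half_lt_self ht₀')] with τ hτ
      refine (ae_restrict_iff' measurableSet_Ioi).2 (Filter.Eventually.of_forall ?_)
      intro r hr
      have hr' : (0:ℝ) < r := hr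
      have hτ' : (0:ℝ) < τ := lt_trans (by positivity) hτ
      have hnn := hf_nonneg τ r hr
      rw [Real.norm_eq_abs, abs_of_nonneg hnn]
      refine (hf_le τ hτ' r hr).trans ?_
      refine mul_le_mul_of_nonneg_left ?_ (by positivity)
      refine add_le_add le_rfl ?_
      refine mul_le_mul_of_nonneg_right ?_ (Real.rpow_nonneg hr'.le _)
      exact Real.exp_le_exp.2 (by nlinarith [mul_pos hr' (sub_pos.2 hτ)])
    · exact hh_int (t₀/2) (by positivity)
    · refine (ae_restrict_iff' measurableSet_Ioi).2 (Filter.Eventually.of_forall ?_)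
      intro r hr
      have : ContinuousAt (fun τ : ℝ => Real.exp (-r * τ) * S r / ((S r)^2 + (C r)^2)) t₀ := by
        have h1 : Continuous (fun τ : ℝ => Real.exp (-r * τ)) :=
          Real.continuous_exp.comp (continuous_const.mul continuous_id)
        exact ((h1.mul continuous_const).div_const _).continuousAt
      exact this
  -- finish
  refine ⟨γ, ⟨hγ0, hγ4⟩, hb, hmain, ?_⟩
  intro T hT
  haveI : IsFiniteMeasure (volume.restrict (Ioo (0:ℝ) T)) :=
    ⟨by rw [Measure.restrict_apply_univ]; exact measure_Ioo_lt_top⟩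
  set A := (1 / (bb * π)) * (1/γ) with hA
  set B := (1 / (bb * π)) * Real.Gamma (1/2 - γ) with hB
  have hApos : 0 ≤ A := by positivity
  have hBpos : 0 ≤ B := by
    have := Real.Gamma_pos_of_pos hγhalf
    positivity
  have hg_aesm : AEStronglyMeasurable g (volume.restrict (Ioo 0 T)) := by
    have h1 : ContinuousOn (fun t => (1/π) *
        ∫ r in Ioi (0:ℝ), Real.exp (-r * t) * S r / ((S r)^2 + (C r)^2)) (Ioo 0 T) :=
      (continuousOn_const.mul hGc).mono (fun x hx => hx.1)
    refine (h1.aestronglyMeasurable measurableSet_Ioo).congr ?_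
    refine (ae_restrict_iff' measurableSet_Ioo).2 (Filter.Eventually.of_forall ?_)
    intro t ht
    exact (hg t ht.1).symm
  have hrpow_mem : MemLp (fun t : ℝ => t ^ (γ - 1/2)) 2 (volume.restrict (Ioo 0 T)) := by
    have haesm : AEStronglyMeasurable (fun t : ℝ => t ^ (γ - 1/2))
        (volume.restrict (Ioo 0 T)) := by
      refine ContinuousOn.aestronglyMeasurable ?_ measurableSet_Ioo
      intro t ht
      exact (Real.continuousAt_rpow_const t _ (Or.inl (ne_of_gt ht.1))).continuousWithinAt
    rw [memLp_two_iff_integrable_sq haesm]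
    have hint2 : IntegrableOn (fun t : ℝ => t ^ (2*γ - 1)) (Ioo 0 T) := by
      have := intervalIntegral.intervalIntegrable_rpow' (a := 0) (b := T) (by linarith : (-1:ℝ) < 2*γ - 1)
      rw [intervalIntegrable_iff_integrableOn_Ioc_of_le hT.le] at this
      exact this.mono_set Ioo_subset_Ioc_self
    refine hint2.congr ?_
    refine (ae_restrict_iff' measurableSet_Ioo).2 (Filter.Eventually.of_forall ?_)
    intro t ht
    show t ^ (2*γ - 1) = (t ^ (γ - 1/2)) ^ 2
    rw [← Real.rpow_natCast (t ^ (γ - 1/2)) 2, ← Real.rpow_mul ht.1.le]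
    norm_num
    congr 1
    ring
  have hφmem : MemLp (fun t : ℝ => A + B * t ^ (γ - 1/2)) 2 (volume.restrict (Ioo 0 T)) :=
    (memLp_const A).add (hrpow_mem.const_mul B)
  refine MemLp.of_le hφmem hg_aesm ?_
  refine (ae_restrict_iff' measurableSet_Ioo).2 (Filter.Eventually.of_forall ?_)
  intro t ht
  have h1 : g t ≤ A + B * t ^ (γ - 1/2) := by
    have := hmain t ht.1
    rw [hA, hB]
    calc g t ≤ (1 / (bb * π)) * (1/γ + Real.Gamma (1/2 - γ) * t ^ (γ - 1/2)) := this
      _ = (1 / (bb * π)) * (1/γ) + (1 / (bb * π)) * Real.Gamma (1/2 - γ) * t ^ (γ - 1/2) := by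
          ring
  rw [Real.norm_eq_abs, Real.norm_eq_abs, abs_of_nonneg (hg_nonneg t ht.1)]
  exact h1.trans (le_abs_self _)
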